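/- Let P be a joint distribution over (Y, Z) given X = x with all probabilities positive, and define the realized per-token reward r_t(y_t) = log P(z | x, y_{≤t}) − log P(z | x, y_{<t}). Then for each fixed t and prefix y_{<t}, E_{Y_t ∼ P(·|x,y_{<t})}[ E_{Z∼P(·|x,y_{<t},Y_t)}[ r_t(Y_t) ] ] = I(Y_t; Z | X=x, Y_{<t}=y_{<t}) ≥ 0, while for each fixed z, E_{Y_t ∼ P(·|x,y_{<t})}[r_t(Y_t)] = −KL(P(Y_t|x,y_{<t}) ‖ P(Y_t|x,y_{<t},z)) ≤ 0. -/

import Mathlib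

open scoped BigOperators

lemma gibbs_aux {ι : Type*} [Fintype ι] (p q : ι → ℝ) (hp : ∀ i, 0 < p i)
    (hq : ∀ i, 0 < q i) (h : ∑ i, q i ≤ ∑ i, p i) :
    ∑ i, p i * Real.log (q i / p i) ≤ 0 := by
  have key : ∀ i, p i * Real.log (q i / p i) ≤ q i - p i := by
    intro i
    have hlog : Real.log (q i / p i) ≤ q i / p i - 1 :=
      Real.log_le_sub_one_of_pos (div_pos (hq i) (hp i))
    calc p i * Real.log (q i / p i) ≤ p i * (q i / p i - 1) :=
          mul_le_mul_of_nonneg_left hlog (hp i).le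
      _ = q i - p i := by
          rw [mul_sub, mul_div_cancel₀ _ (hp i).ne', mul_one]
  calc ∑ i, p i * Real.log (q i / p i) ≤ ∑ i, (q i - p i) :=
        Finset.sum_le_sum fun i _ => key i
    _ = (∑ i, q i) - ∑ i, p i := Finset.sum_sub_distrib q p
    _ ≤ 0 := by linarith

/-- Fixed prefix `(x, y_{<t})` suppressed; `P a z` is the joint distribution of
`(Y_t, Z)` given the prefix. The realized reward is
`r(a, z) = log((P(z|a)) / P(z)) = log((P a z / P_A a) / P_Z z)`.
Jointly averaged over `(Y_t, Z)`, the reward equals the conditional mutual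
information `I(Y_t; Z)` and is non-negative; for a fixed feedback value `z`,
its prior expectation equals `−KL(P(Y_t) ‖ P(Y_t | z))` and is non-positive. -/
theorem stmt18 {A Zt : Type*} [Fintype A] [Fintype Zt]
    (P : A → Zt → ℝ) (hpos : ∀ a z, 0 < P a z) (hsum : ∑ a, ∑ z, P a z = 1) :
    (∑ a, ∑ z, P a z * Real.log ((P a z / ∑ z', P a z') / (∑ a', P a' z))
      = ∑ a, ∑ z, P a z * Real.log (P a z / ((∑ z', P a z') * (∑ a', P a' z)))) ∧
    (0 ≤ ∑ a, ∑ z, P a z * Real.log (P a z / ((∑ z', P a z') * (∑ a', P a' z)))) ∧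
    (∀ z : Zt,
      (∑ a, (∑ z', P a z') * Real.log ((P a z / ∑ z', P a z') / (∑ a', P a' z))
        = -∑ a, (∑ z', P a z') *
            Real.log ((∑ z', P a z') / (P a z / (∑ a', P a' z)))) ∧
      (∑ a, (∑ z', P a z') * Real.log ((P a z / ∑ z', P a z') / (∑ a', P a' z))
        ≤ 0)) := by
  have hA : Nonempty A := by
    rcases isEmpty_or_nonempty A with h | h
    · simp [Finset.univ_eq_empty] at hsum
    · exact h
  have hZ : Nonempty Zt := by
    rcases isEmpty_or_nonempty Zt with h | h
    · simp [Finset.univ_eq_empty] at hsum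
    · exact h
  have hSA : ∀ a, 0 < ∑ z', P a z' := fun a =>
    Finset.sum_pos (fun z _ => hpos a z) Finset.univ_nonempty
  have hSZ : ∀ z, 0 < ∑ a', P a' z := fun z =>
    Finset.sum_pos (fun a _ => hpos a z) Finset.univ_nonempty
  have hSAsum : ∑ a, ∑ z', P a z' = 1 := hsum
  have hSZsum : ∑ z, ∑ a', P a' z = 1 := by
    rw [Finset.sum_comm]; exact hsum
  refine ⟨?_, ?_, ?_⟩
  · refine Finset.sum_congr rfl fun a _ => Finset.sum_congr rfl fun z _ => ?_
    rw [div_div]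
  · -- MI nonnegativity via Gibbs on the product type
    have hp1 : ∑ p : A × Zt, P p.1 p.2 = 1 := by
      rw [Fintype.sum_prod_type]; exact hsum
    have hq1 : ∑ p : A × Zt, (∑ z', P p.1 z') * (∑ a', P a' p.2) = 1 := by
      rw [Fintype.sum_prod_type]
      simp_rw [← Finset.mul_sum, hSZsum, mul_one]
      exact hSAsum
    have h := gibbs_aux (ι := A × Zt) (fun p => P p.1 p.2)
      (fun p => (∑ z', P p.1 z') * (∑ a', P a' p.2))
      (fun p => hpos p.1 p.2)
      (fun p => mul_pos (hSA p.1) (hSZ p.2)) (by rw [hp1, hq1])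
    have hrw : ∑ a, ∑ z, P a z * Real.log (P a z / ((∑ z', P a z') * (∑ a', P a' z)))
        = -∑ p : A × Zt, P p.1 p.2 *
            Real.log (((∑ z', P p.1 z') * (∑ a', P a' p.2)) / P p.1 p.2) := by
      rw [← Finset.sum_neg_distrib, Fintype.sum_prod_type]
      refine Finset.sum_congr rfl fun a _ => Finset.sum_congr rfl fun z _ => ?_
      rw [← mul_neg, ← Real.log_inv, inv_div]
    rw [hrw]
    simpa using h
  · intro z
    constructor
    · rw [← Finset.sum_neg_distrib]
      refine Finset.sum_congr rfl fun a _ => ?_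
      rw [← mul_neg, ← Real.log_inv]
      congr 1
      rw [inv_div, div_div, div_div, mul_comm]
    · have h := gibbs_aux (fun a => ∑ z', P a z') (fun a => P a z / ∑ a', P a' z)
        hSA (fun a => div_pos (hpos a z) (hSZ z))
        (by rw [← Finset.sum_div, div_self (hSZ z).ne', hSAsum])
      calc ∑ a, (∑ z', P a z') * Real.log ((P a z / ∑ z', P a z') / (∑ a', P a' z))
          = ∑ a, (∑ z', P a z') * Real.log ((P a z / ∑ a', P a' z) / ∑ z', P a z') := by
            refine Finset.sum_congr rfl fun a _ => ?_
            congr 1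
            rw [div_div, div_div, mul_comm]
        _ ≤ 0 := h
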